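/- arXiv:2212.06819 — 2 statements merged into one kernel-verified Lean document; each statement's English description precedes it below -/
import Mathlib

section
/- Let G be a finite connected graph with first Betti number b1 and let (γ_1,…,γ_{b1}) be an integral basis of the cycle group Z_1(G,ℤ). Then in the b1-th exterior power of C_1(G,ℤ), one has γ_1 ∧ … ∧ γ_{b1} = Σ_{T spanning tree of G} ε_T · e_{T^c}, where e_{T^c} is the wedge of the positively oriented edges not in T (in a fixed order) and ε_T ∈ {−1,+1} is the determinant of the change of basis from (γ_i) to the fundamental cycle basis associated with T. -/
/-! Framework: a finite graph is given by a finite vertex type `V`, a finite linearly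
ordered type `E` of (positively oriented) edges, and maps `head, tail : E → V`.
`C_1(G,ℤ)` is modeled as `E → ℤ` (coordinates in the canonical edge basis). -/

section Graph

variable {V E : Type*} [Fintype V] [Fintype E] [DecidableEq V] [DecidableEq E]
  [LinearOrder E]

/-- The boundary operator `∂ : C₁(G,ℤ) → C₀(G,ℤ)`, `∂e = head e − tail e`. -/
def bd (head tail : E → V) : (E → ℤ) →ₗ[ℤ] (V → ℤ) where
  toFun c := fun v => ∑ e, c e *
    ((if head e = v then 1 else 0) - (if tail e = v then 1 else 0))
  map_add' c d := by
    funext v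
    simp [add_mul, Finset.sum_add_distrib]
  map_smul' r c := by
    funext v
    simp [Finset.mul_sum, mul_assoc]

/-- Two vertices are connected through the edges of `T`. -/
def Conn (head tail : E → V) (T : Finset E) (v w : V) : Prop :=
  Relation.ReflTransGen
    (fun a b => ∃ e ∈ T, (head e = a ∧ tail e = b) ∨ (head e = b ∧ tail e = a)) v w

/-- `T` is a spanning tree: it has `|V| − 1` edges and connects all vertices. -/
def IsSpanningTree (head tail : E → V) (T : Finset E) : Prop :=
  T.card + 1 = Fintype.card V ∧ ∀ v w : V, Conn head tail T v w

/-- The wedge `e_S` of the canonical basis vectors of the edges of `S`, taken in the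
fixed linear order on `E`, in the exterior algebra of `C₁(G,ℤ)`. -/
noncomputable def eWedge (S : Finset E) : ExteriorAlgebra ℤ (E → ℤ) :=
  ((S.sort (· ≤ ·)).map (fun e => ExteriorAlgebra.ι ℤ (Pi.single e (1 : ℤ)))).prod

/-- The wedge `γ₁ ∧ … ∧ γₙ` of a family of chains. -/
noncomputable def chainWedge {n : ℕ} (γ : Fin n → (E → ℤ)) :
    ExteriorAlgebra ℤ (E → ℤ) :=
  ((List.finRange n).map (fun i => ExteriorAlgebra.ι ℤ (γ i))).prod

/-- The change-of-basis determinant `det(𝒵/𝒵_T)` between a cycle basis `γ` and the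
fundamental cycle basis of a spanning tree `T`: since the fundamental cycle `γ(T,f)`
is the unique basis cycle with a (unit) coordinate on `f ∉ T`, this is the determinant
of the matrix of coordinates of the `γᵢ` on the edges outside `T` (in the fixed
order). -/
noncomputable def cbDet {n : ℕ} (γ : Fin n → (E → ℤ)) (T : Finset E) : ℤ :=
  if h : ((Tᶜ : Finset E).sort (· ≤ ·)).length = n then
    Matrix.det (Matrix.of fun i j : Fin n =>
      γ j (((Tᶜ : Finset E).sort (· ≤ ·)).get (Fin.cast h.symm i)))
  else 0

end Graph

namespace Symanzik

open Finset

set_option linter.unusedSectionVars false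
set_option maxHeartbeats 1000000

variable {V E : Type*} [Fintype V] [Fintype E] [DecidableEq V] [DecidableEq E]
  [LinearOrder E]

/-- The sorted enumeration of a finset of edges. -/
def sEnum {n : ℕ} (S : Finset E) (h : (S.sort (· ≤ ·)).length = n) : Fin n → E :=
  fun i => (S.sort (· ≤ ·)).get (Fin.cast h.symm i)

lemma sEnum_mem {n : ℕ} (S : Finset E) (h : (S.sort (· ≤ ·)).length = n) (i : Fin n) :
    sEnum S h i ∈ S := by
  rw [← Finset.mem_sort (α := E) (· ≤ ·)]
  exact List.get_mem _ _

lemma sEnum_inj {n : ℕ} (S : Finset E) (h : (S.sort (· ≤ ·)).length = n) :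
    Function.Injective (sEnum S h) := by
  intro i j hij
  have := (S.sort_nodup (· ≤ ·)).get_inj_iff.mp hij
  simpa [Fin.ext_iff] using this

/-- The auxiliary determinant, indexed by the subset itself instead of its complement. -/
noncomputable def sDet {n : ℕ} (γ : Fin n → (E → ℤ)) (S : Finset E) : ℤ :=
  if h : (S.sort (· ≤ ·)).length = n then
    Matrix.det (Matrix.of fun i j : Fin n => γ j (sEnum S h i))
  else 0

lemma cbDet_eq_sDet {n : ℕ} (γ : Fin n → (E → ℤ)) (T : Finset E) :
    cbDet γ T = sDet γ (Tᶜ) := rfl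

lemma chainWedge_eq_iMulti {n : ℕ} (γ : Fin n → (E → ℤ)) :
    chainWedge γ = ExteriorAlgebra.ιMulti ℤ n γ := by
  rw [chainWedge, ExteriorAlgebra.ιMulti_apply, List.ofFn_eq_map]

lemma eWedge_eq_iMulti {n : ℕ} (S : Finset E) (h : (S.sort (· ≤ ·)).length = n) :
    eWedge S = ExteriorAlgebra.ιMulti ℤ n (fun i => Pi.single (sEnum S h i) (1 : ℤ)) := by
  subst h
  rw [ExteriorAlgebra.ιMulti_apply, eWedge]
  conv_lhs => rw [← List.ofFn_get (S.sort (· ≤ ·))]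
  rw [List.map_ofFn]
  rfl

lemma fiber_sum {n : ℕ} (γ : Fin n → (E → ℤ)) (S : Finset E) (hcard : S.card = n)
    (s : Fin n → E) (hs_inj : Function.Injective s) (hs_mem : ∀ i, s i ∈ S)
    (f : (E → ℤ) [⋀^Fin n]→ₗ[ℤ] ExteriorAlgebra ℤ (E → ℤ)) :
    ∑ φ ∈ Finset.univ.filter (fun φ : Fin n → E => Finset.image φ Finset.univ = S),
        (∏ i, γ i (φ i)) • f (fun i => Pi.single (φ i) (1 : ℤ))
      = Matrix.det (Matrix.of fun i j : Fin n => γ j (s i)) •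
          f (fun i => Pi.single (s i) (1:ℤ)) := by
  classical
  have hcoe : Fintype.card {x // x ∈ S} = n := by rw [Fintype.card_coe, hcard]
  have hsbij : Function.Bijective (fun i : Fin n => (⟨s i, hs_mem i⟩ : {x // x ∈ S})) := by
    rw [Fintype.bijective_iff_injective_and_card]
    exact ⟨fun a b hab => hs_inj (congrArg Subtype.val hab), by simp [hcoe]⟩
  set se : Fin n ≃ {x // x ∈ S} := Equiv.ofBijective _ hsbij with hse
  have hseval : ∀ i, (se i : E) = s i := fun i => rfl
  have hbij : (∑ φ ∈ Finset.univ.filter (fun φ : Fin n → E => Finset.image φ Finset.univ = S),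
        (∏ i, γ i (φ i)) • f (fun i => Pi.single (φ i) (1 : ℤ)))
      = ∑ σ : Equiv.Perm (Fin n),
        (∏ i, γ i (s (σ i))) • f (fun i => Pi.single (s (σ i)) (1 : ℤ)) := by
    refine (Finset.sum_bij (fun (σ : Equiv.Perm (Fin n)) _ => s ∘ σ) ?_ ?_ ?_ ?_).symm
    · intro σ _
      rw [Finset.mem_filter]
      refine ⟨Finset.mem_univ _, ?_⟩
      have h1 : Finset.image (s ∘ σ) Finset.univ = Finset.image s Finset.univ := by
        rw [← Finset.image_image]
        congr 1
        exact Finset.image_univ_equiv σ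
      rw [h1]
      apply Finset.eq_of_subset_of_card_le
      · intro x hx
        obtain ⟨i, _, rfl⟩ := Finset.mem_image.mp hx
        exact hs_mem i
      · rw [Finset.card_image_of_injective _ hs_inj, Finset.card_univ, Fintype.card_fin, hcard]
    · intro σ _ τ _ h
      exact Equiv.ext fun i => hs_inj (congrFun h i)
    · intro φ hφ
      rw [Finset.mem_filter] at hφ
      have himg : Finset.image φ Finset.univ = S := hφ.2
      have hφinj : Function.Injective φ := by
        have hinj : Set.InjOn φ ↑(Finset.univ : Finset (Fin n)) :=
          Finset.injOn_of_card_image_eq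
            (by rw [himg, hcard, Finset.card_univ, Fintype.card_fin])
        exact fun a b h => hinj (by simp) (by simp) h
      have hφbij : Function.Bijective (fun i : Fin n => (⟨φ i, by
          rw [← himg]; exact Finset.mem_image_of_mem _ (Finset.mem_univ i)⟩ : {x // x ∈ S})) := by
        rw [Fintype.bijective_iff_injective_and_card]
        exact ⟨fun a b hab => hφinj (congrArg Subtype.val hab), by simp [hcoe]⟩
      refine ⟨(Equiv.ofBijective _ hφbij).trans se.symm, Finset.mem_univ _, ?_⟩
      funext i
      show s ((se.symm) (Equiv.ofBijective _ hφbij i)) = φ i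
      refine Eq.symm ?_
      have : se ((se.symm) (Equiv.ofBijective _ hφbij i)) = Equiv.ofBijective _ hφbij i :=
        se.apply_symm_apply _
      calc φ i = ((Equiv.ofBijective _ hφbij i : {x // x ∈ S}) : E) := rfl
        _ = (se ((se.symm) (Equiv.ofBijective _ hφbij i)) : E) := by rw [this]
        _ = s ((se.symm) (Equiv.ofBijective _ hφbij i)) := hseval _
    · intro σ _
      rfl
  rw [hbij]
  have hperm : ∀ σ : Equiv.Perm (Fin n),
      f (fun i => Pi.single (s (σ i)) (1 : ℤ))
        = Equiv.Perm.sign σ • f (fun i => Pi.single (s i) (1:ℤ)) :=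
    fun σ => f.map_perm (fun i => Pi.single (s i) (1:ℤ)) σ
  rw [Matrix.det_apply, Finset.sum_smul]
  refine Finset.sum_congr rfl fun σ _ => ?_
  rw [hperm σ, Units.smul_def, smul_smul]
  congr 1
  rw [Units.smul_def, smul_eq_mul, mul_comm]
  rfl

lemma wedge_expansion {n : ℕ} (γ : Fin n → (E → ℤ)) :
    chainWedge γ = ∑ S : Finset E, sDet γ S • eWedge S := by
  classical
  have h1 : chainWedge γ
      = ∑ φ : Fin n → E, (∏ i, γ i (φ i)) •
          ExteriorAlgebra.ιMulti ℤ n (fun i => Pi.single (φ i) (1 : ℤ)) := by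
    rw [chainWedge_eq_iMulti]
    have hexp : γ = fun i => ∑ e, γ i e • Pi.single e (1 : ℤ) := by
      funext i e
      simp [Pi.single_apply]
    conv_lhs => rw [hexp]
    rw [show ∀ v : Fin n → E → ℤ, ExteriorAlgebra.ιMulti ℤ n v
        = (ExteriorAlgebra.ιMulti ℤ n (M := E → ℤ)).toMultilinearMap v from fun v => rfl]
    rw [MultilinearMap.map_sum]
    refine Finset.sum_congr rfl fun φ _ => ?_
    exact (ExteriorAlgebra.ιMulti ℤ n (M := E → ℤ)).toMultilinearMap.map_smul_univ
      (fun i => γ i (φ i)) (fun i => Pi.single (φ i) (1:ℤ))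
  have h2 := Finset.sum_fiberwise (Finset.univ : Finset (Fin n → E))
    (fun φ => Finset.image φ Finset.univ)
    (fun φ => (∏ i, γ i (φ i)) •
      ExteriorAlgebra.ιMulti ℤ n (M := E → ℤ) (fun i => Pi.single (φ i) (1 : ℤ)))
  rw [h1, ← h2]
  refine Finset.sum_congr rfl fun S _ => ?_
  by_cases hcard : S.card = n
  · have hlen : (S.sort (· ≤ ·)).length = n := by rw [Finset.length_sort]; exact hcard
    rw [sDet, dif_pos hlen, eWedge_eq_iMulti S hlen]
    exact fiber_sum γ S hcard (sEnum S hlen) (sEnum_inj S hlen) (sEnum_mem S hlen) _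
  · have hlen : ¬ (S.sort (· ≤ ·)).length = n := by rw [Finset.length_sort]; exact hcard
    rw [sDet, dif_neg hlen, zero_smul]
    refine Finset.sum_eq_zero fun φ hφ => ?_
    rw [Finset.mem_filter] at hφ
    have hninj : ¬ Function.Injective φ := by
      intro hinj
      exact hcard (by rw [← hφ.2, Finset.card_image_of_injective _ hinj, Finset.card_univ,
        Fintype.card_fin])
    obtain ⟨i, j, hij, hne⟩ := Function.not_injective_iff.mp hninj
    have : ExteriorAlgebra.ιMulti ℤ n (fun i => Pi.single (φ i) (1 : ℤ)) = 0 :=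
      (ExteriorAlgebra.ιMulti ℤ n (M := E → ℤ)).map_eq_zero_of_eq _ (by rw [hij]) hne
    rw [this, smul_zero]

end Symanzik
namespace Symanzik

section PartB

variable {V E : Type*} [Fintype V] [Fintype E] [DecidableEq V] [DecidableEq E]
  [LinearOrder E]

lemma bd_apply (head tail : E → V) (z : E → ℤ) (v : V) :
    bd head tail z v = ∑ e, z e *
      ((if head e = v then 1 else 0) - (if tail e = v then 1 else 0)) := rfl

lemma bd_single (head tail : E → V) (e : E) (c : ℤ) :
    bd head tail (Pi.single e c)
      = c • (Pi.single (head e) (1:ℤ) - Pi.single (tail e) 1) := by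
  funext v
  rw [bd_apply]
  rw [Finset.sum_eq_single e]
  · simp [Pi.single_apply, eq_comm, mul_sub]
  · intro f _ hfe
    simp [Pi.single_apply, hfe]
  · intro h
    exact absurd (Finset.mem_univ e) h

lemma exists_path (head tail : E → V) (T : Finset E) {v w : V}
    (h : Conn head tail T v w) :
    ∃ p : E → ℤ, (∀ e, e ∉ T → p e = 0) ∧
      bd head tail p = (Pi.single w 1 - Pi.single v 1 : V → ℤ) := by
  induction h with
  | refl => exact ⟨0, fun e _ => rfl, by simp⟩
  | @tail b w hvb hbw ih =>
      obtain ⟨p, hp0, hpd⟩ := ih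
      obtain ⟨e, heT, hcase⟩ := hbw
      rcases hcase with ⟨hh, ht⟩ | ⟨hh, ht⟩
      · refine ⟨p - Pi.single e 1, ?_, ?_⟩
        · intro f hf
          have hfe : f ≠ e := fun hq => hf (hq ▸ heT)
          simp [hp0 f hf, Pi.single_apply, hfe]
        · rw [map_sub, hpd, bd_single, hh, ht, one_smul]
          abel
      · refine ⟨p + Pi.single e 1, ?_, ?_⟩
        · intro f hf
          have hfe : f ≠ e := fun hq => hf (hq ▸ heT)
          simp [hp0 f hf, Pi.single_apply, hfe]
        · rw [map_add, hpd, bd_single, hh, ht, one_smul]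
          abel

/-- If `T` is a spanning tree, the change-of-basis determinant is `±1`. -/
lemma cbDet_unit (head tail : E → V) (b₁ : ℕ)
    (hb₁ : b₁ + Fintype.card V = Fintype.card E + 1)
    (γ : Fin b₁ → (E → ℤ))
    (hγ_span : Submodule.span ℤ (Set.range γ) = LinearMap.ker (bd head tail))
    (T : Finset E) (hT : IsSpanningTree head tail T) :
    cbDet γ T = 1 ∨ cbDet γ T = -1 := by
  classical
  obtain ⟨hTcard, hTconn⟩ := hT
  have hcc := Finset.card_add_card_compl T
  have hTle : T.card ≤ Fintype.card E := Finset.card_le_univ T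
  have hcardc : (Tᶜ : Finset E).card = b₁ := by omega
  have hlen : ((Tᶜ : Finset E).sort (· ≤ ·)).length = b₁ := by
    rw [Finset.length_sort]; exact hcardc
  set s : Fin b₁ → E := sEnum (Tᶜ) hlen with hs
  have hz : ∀ i : Fin b₁, ∃ z : E → ℤ, bd head tail z = 0 ∧
      (∀ j, z (s j) = if i = j then 1 else 0) := by
    intro i
    obtain ⟨p, hp0, hpd⟩ := exists_path head tail T (hTconn (head (s i)) (tail (s i)))
    refine ⟨Pi.single (s i) 1 + p, ?_, ?_⟩
    · rw [map_add, hpd, bd_single, one_smul]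
      abel
    · intro j
      have hsj : s j ∉ T := Finset.mem_compl.mp (sEnum_mem _ hlen j)
      have hps : p (s j) = 0 := hp0 _ hsj
      by_cases hij : i = j
      · subst hij; simp [hps, Pi.single_apply]
      · have : s i ≠ s j := fun hq => hij (sEnum_inj _ hlen hq)
        simp [hps, Pi.single_apply, this, hij]
  choose z hz0 hzval using hz
  have hmem : ∀ i, z i ∈ Submodule.span ℤ (Set.range γ) := by
    rw [hγ_span]
    exact fun i => LinearMap.mem_ker.mpr (hz0 i)
  have hc : ∀ i, ∃ c : Fin b₁ → ℤ, ∑ j, c j • γ j = z i :=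
    fun i => (Finsupp.mem_span_range_iff_exists_finsupp.mp (hmem i)).elim
      (fun c hcv => ⟨c, by rw [← hcv, Finsupp.sum_fintype]; intro j; simp⟩)
  choose c hcval using hc
  set M : Matrix (Fin b₁) (Fin b₁) ℤ := Matrix.of fun i j => γ j (s i) with hM
  set C : Matrix (Fin b₁) (Fin b₁) ℤ := Matrix.of fun i j => c i j with hC
  have hCM : C * M.transpose = 1 := by
    ext i k
    have h1 := congrFun (hcval i) (s k)
    have h2 : (∑ j, c i j • γ j) (s k) = ∑ j, c i j * γ j (s k) := by
      rw [Finset.sum_apply]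
      exact Finset.sum_congr rfl fun j _ => rfl
    rw [h2, hzval i k] at h1
    simpa [Matrix.mul_apply, Matrix.one_apply, hM, hC, Matrix.transpose_apply] using h1
  have hdet : C.det * M.det = 1 := by
    have h := congrArg Matrix.det hCM
    rwa [Matrix.det_mul, Matrix.det_transpose, Matrix.det_one] at h
  have hunit : IsUnit M.det := ⟨⟨M.det, C.det, by rw [mul_comm]; exact hdet, hdet⟩, rfl⟩
  rw [cbDet, dif_pos hlen]
  exact Int.isUnit_iff.mp hunit

end PartB

end Symanzik
namespace Symanzik

section PartC

set_option linter.unusedSectionVars false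
set_option maxHeartbeats 1000000

variable {V E : Type*} [Fintype V] [Fintype E] [DecidableEq V] [DecidableEq E]
  [LinearOrder E]

/-- Rational boundary operator. -/
def bdQ (head tail : E → V) : (E → ℚ) →ₗ[ℚ] (V → ℚ) where
  toFun c := fun v => ∑ e, c e *
    ((if head e = v then 1 else 0) - (if tail e = v then 1 else 0))
  map_add' c d := by
    funext v
    simp [add_mul, Finset.sum_add_distrib]
  map_smul' r c := by
    funext v
    simp [Finset.mul_sum, mul_assoc]

lemma bdQ_cast (head tail : E → V) (z : E → ℤ) :
    bdQ head tail (fun e => (z e : ℚ)) = fun v => ((bd head tail z v : ℤ) : ℚ) := by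
  funext v
  show (∑ e, (z e : ℚ) * ((if head e = v then 1 else 0) - (if tail e = v then 1 else 0)))
    = ((∑ e, z e * ((if head e = v then 1 else 0) - (if tail e = v then 1 else 0)) : ℤ) : ℚ)
  push_cast
  rfl

/-- Summation over a finite set of vertices, as a linear functional. -/
def sumOn (A : Finset V) : (V → ℚ) →ₗ[ℚ] ℚ where
  toFun x := ∑ u ∈ A, x u
  map_add' x y := by simp [Finset.sum_add_distrib]
  map_smul' r x := by simp [Finset.mul_sum]

lemma sumOn_bdQ (head tail : E → V) (A : Finset V) (z : E → ℚ) :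
    sumOn A (bdQ head tail z) = ∑ e, z e *
      ((if head e ∈ A then 1 else 0) - (if tail e ∈ A then 1 else 0)) := by
  show (∑ u ∈ A, ∑ e, z e *
      ((if head e = u then 1 else 0) - (if tail e = u then 1 else 0))) = _
  rw [Finset.sum_comm]
  refine Finset.sum_congr rfl fun e _ => ?_
  rw [← Finset.mul_sum]
  congr 1
  rw [Finset.sum_sub_distrib, Finset.sum_ite_eq, Finset.sum_ite_eq]

lemma sumOn_single (A : Finset V) (u : V) (a : ℚ) :
    sumOn A (Pi.single u a) = if u ∈ A then a else 0 := by
  show (∑ x ∈ A, Pi.single u a x) = _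
  simp [Pi.single_apply, Finset.sum_ite_eq]

/-- Extension by zero. -/
def extT (T : Finset E) : ({e // e ∈ T} → ℚ) →ₗ[ℚ] (E → ℚ) where
  toFun f := fun e => if h : e ∈ T then f ⟨e, h⟩ else 0
  map_add' f g := by funext e; by_cases h : e ∈ T <;> simp [h]
  map_smul' r f := by funext e; by_cases h : e ∈ T <;> simp [h]

lemma exists_ker_vector (head tail : E → V) (T : Finset E)
    (hTcard : T.card + 1 = Fintype.card V)
    {v w : V} (hnc : ¬ Conn head tail T v w) :
    ∃ z : E → ℚ, z ≠ 0 ∧ (∀ e, e ∉ T → z e = 0) ∧ bdQ head tail z = 0 := by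
  classical
  set A : Finset V := Finset.univ.filter (fun u => Conn head tail T v u) with hA
  have hvA : v ∈ A := Finset.mem_filter.mpr ⟨Finset.mem_univ _, Relation.ReflTransGen.refl⟩
  have hwA : w ∉ A := fun hw => hnc (Finset.mem_filter.mp hw).2
  set φ := sumOn (V := V) A with hφ
  set ψ := sumOn (V := V) Finset.univ with hψ
  set G : (V → ℚ) →ₗ[ℚ] ℚ × ℚ := φ.prod ψ with hG
  set F : ({e // e ∈ T} → ℚ) →ₗ[ℚ] (V → ℚ) := (bdQ head tail).comp (extT T) with hF
  have hvw : v ≠ w := fun h => hwA (h ▸ hvA)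
  have hGsurj : Function.Surjective G := by
    rintro ⟨a, b⟩
    refine ⟨a • (Pi.single v 1 : V → ℚ) + (b - a) • (Pi.single w 1 : V → ℚ), ?_⟩
    have h1 : φ (a • (Pi.single v 1 : V → ℚ) + (b - a) • (Pi.single w 1 : V → ℚ)) = a := by
      rw [map_add, map_smul, map_smul, hφ, sumOn_single, sumOn_single]
      simp [hvA, hwA]
    have h2 : ψ (a • (Pi.single v 1 : V → ℚ) + (b - a) • (Pi.single w 1 : V → ℚ)) = b := by
      rw [map_add, map_smul, map_smul, hψ, sumOn_single, sumOn_single]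
      simp [Finset.mem_univ]
    show (_, _) = (a, b)
    rw [h1, h2]
  have hrange : LinearMap.range F ≤ LinearMap.ker G := by
    rintro x ⟨f, rfl⟩
    have hsupp : ∀ e, e ∉ T → extT T f e = 0 := by
      intro e he
      simp [extT, he]
    have hφ0 : φ (bdQ head tail (extT T f)) = 0 := by
      rw [hφ, sumOn_bdQ]
      refine Finset.sum_eq_zero fun e _ => ?_
      by_cases heT : e ∈ T
      · have hiff : (head e ∈ A) ↔ (tail e ∈ A) := by
          simp only [hA, Finset.mem_filter, Finset.mem_univ, true_and]
          constructor
          · intro h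
            exact h.tail ⟨e, heT, Or.inl ⟨rfl, rfl⟩⟩
          · intro h
            exact h.tail ⟨e, heT, Or.inr ⟨rfl, rfl⟩⟩
        by_cases hh : head e ∈ A
        · rw [if_pos hh, if_pos (hiff.mp hh), sub_self, mul_zero]
        · rw [if_neg hh, if_neg (fun ht => hh (hiff.mpr ht)), sub_self, mul_zero]
      · rw [hsupp e heT, zero_mul]
    have hψ0 : ψ (bdQ head tail (extT T f)) = 0 := by
      rw [hψ, sumOn_bdQ]
      refine Finset.sum_eq_zero fun e _ => ?_
      simp
    have : G (F f) = (0, 0) := by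
      show (φ _, ψ _) = (0, 0)
      rw [show (bdQ head tail).comp (extT T) f = bdQ head tail (extT T f) from rfl] at *
      rw [hφ0, hψ0]
    rw [LinearMap.mem_ker, this]
    rfl
  -- finrank bookkeeping
  have hfinT : Module.finrank ℚ ({e // e ∈ T} → ℚ) = T.card := by
    rw [Module.finrank_pi, Fintype.card_coe]
  have hfinV : Module.finrank ℚ (V → ℚ) = Fintype.card V := by
    rw [Module.finrank_pi]
  have hfinP : Module.finrank ℚ (ℚ × ℚ) = 2 := by
    rw [Module.finrank_prod, Module.finrank_self]
  have hkerG : Module.finrank ℚ (LinearMap.ker G) + 2 = Fintype.card V := by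
    have h := LinearMap.finrank_range_add_finrank_ker G
    rw [LinearMap.range_eq_top.mpr hGsurj, hfinV] at h
    rw [finrank_top ℚ (ℚ × ℚ), hfinP] at h
    omega
  have hrangeF : Module.finrank ℚ (LinearMap.range F) ≤ Fintype.card V - 2 := by
    have := Submodule.finrank_mono hrange
    omega
  have hkerF : 0 < Module.finrank ℚ (LinearMap.ker F) := by
    have h := LinearMap.finrank_range_add_finrank_ker F
    rw [hfinT] at h
    have hV2 : 2 ≤ Fintype.card V := by
      by_contra hlt
      push_neg at hlt
      interval_cases hc : Fintype.card V <;> omega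
    omega
  have hne : LinearMap.ker F ≠ ⊥ := by
    intro hbot
    rw [hbot] at hkerF
    simp at hkerF
  obtain ⟨f, hfm, hf0⟩ := Submodule.ne_bot_iff _ |>.mp hne
  refine ⟨extT T f, ?_, ?_, ?_⟩
  · intro hzero
    apply hf0
    funext i
    have := congrFun hzero i.val
    simpa [extT, i.prop] using this
  · intro e he
    simp [extT, he]
  · exact LinearMap.mem_ker.mp hfm

end PartC

end Symanzik
namespace Symanzik

section PartD

set_option linter.unusedSectionVars false
set_option maxHeartbeats 1000000

variable {V E : Type*} [Fintype V] [Fintype E] [DecidableEq V] [DecidableEq E]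
  [LinearOrder E]

lemma sDet_eq_zero (head tail : E → V) (b₁ : ℕ)
    (hb₁ : b₁ + Fintype.card V = Fintype.card E + 1)
    (γ : Fin b₁ → (E → ℤ))
    (hγ_span : Submodule.span ℤ (Set.range γ) = LinearMap.ker (bd head tail))
    (S : Finset E) (hcard : S.card = b₁)
    (hnst : ¬ IsSpanningTree head tail (Sᶜ)) :
    sDet γ S = 0 := by
  classical
  have hlen : (S.sort (· ≤ ·)).length = b₁ := by rw [Finset.length_sort]; exact hcard
  set s : Fin b₁ → E := sEnum S hlen with hs
  have hcc := Finset.card_add_card_compl S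
  have hSle : S.card ≤ Fintype.card E := Finset.card_le_univ S
  have hTcard : (Sᶜ : Finset E).card + 1 = Fintype.card V := by omega
  have hnc : ∃ v w, ¬ Conn head tail (Sᶜ) v w := by
    by_contra h
    push_neg at h
    exact hnst ⟨hTcard, fun v w => h v w⟩
  obtain ⟨v, w, hnc⟩ := hnc
  obtain ⟨z, hz0, hzsupp, hzker⟩ := exists_ker_vector head tail (Sᶜ) hTcard hnc
  set N : ℕ := ∏ e, (z e).den with hN
  have hNpos : 0 < N := Finset.prod_pos (fun e _ => (z e).pos)
  have hy : ∀ e : E, ∃ k : ℤ, (k : ℚ) = z e * N := by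
    intro e
    have hd : (z e).den ∣ N := Finset.dvd_prod_of_mem _ (Finset.mem_univ e)
    obtain ⟨m, hm⟩ := hd
    refine ⟨(z e).num * m, ?_⟩
    have hNq : (N : ℚ) = ((z e).den : ℚ) * (m : ℚ) := by
      rw [hm]; push_cast; ring
    push_cast
    rw [hNq, ← Rat.mul_den_eq_num (z e)]
    ring
  choose y hyval using hy
  have hcast : (fun e => (y e : ℚ)) = (N : ℚ) • z := by
    funext e
    rw [hyval e]
    simp [mul_comm]
  have hbdy : bd head tail y = 0 := by
    have h1 : bdQ head tail (fun e => (y e : ℚ)) = 0 := by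
      rw [hcast, map_smul, hzker, smul_zero]
    funext u
    have h2 := congrFun (bdQ_cast head tail y) u
    rw [h1] at h2
    have h3 : ((bd head tail y u : ℤ) : ℚ) = 0 := h2.symm
    exact_mod_cast h3
  have hymem : y ∈ Submodule.span ℤ (Set.range γ) := by
    rw [hγ_span]
    exact LinearMap.mem_ker.mpr hbdy
  obtain ⟨cf, hcf⟩ := Finsupp.mem_span_range_iff_exists_finsupp.mp hymem
  have hcval : ∑ j, cf j • γ j = y := by
    rw [← hcf, Finsupp.sum_fintype]
    intro j
    simp
  have hNne : (N : ℚ) ≠ 0 := by positivity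
  have hcne : (fun j => cf j) ≠ 0 := by
    intro hc0
    obtain ⟨e, he⟩ := Function.ne_iff.mp hz0
    have hye : (y e : ℚ) = z e * N := hyval e
    have : y e ≠ 0 := by
      intro h0
      rw [h0] at hye
      simp only [Int.cast_zero] at hye
      exact he (by
        have := hye.symm
        rcases mul_eq_zero.mp this with h | h
        · exact h
        · exact absurd h hNne)
    apply this
    rw [← hcval]
    have : ∀ j, cf j = 0 := fun j => congrFun hc0 j
    simp [this]
  have hsval : ∀ i, y (s i) = 0 := by
    intro i
    have hmem' : s i ∈ S := sEnum_mem S hlen i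
    have : z (s i) = 0 := hzsupp _ (by simp [hmem'])
    have hye := hyval (s i)
    rw [this, zero_mul] at hye
    exact_mod_cast hye
  have hmv : (Matrix.of fun i j : Fin b₁ => γ j (s i)).mulVec (fun j => cf j) = 0 := by
    funext i
    show (∑ j, (Matrix.of fun i j : Fin b₁ => γ j (s i)) i j * cf j) = 0
    have h1 : (∑ j, cf j • γ j) (s i) = ∑ j, cf j * γ j (s i) := by
      rw [Finset.sum_apply]
      exact Finset.sum_congr rfl fun j _ => rfl
    have h2 : ∑ j, cf j * γ j (s i) = 0 := by
      rw [← h1, hcval]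
      exact hsval i
    rw [← h2]
    exact Finset.sum_congr rfl fun j _ => mul_comm _ _
  have hdet := Matrix.exists_mulVec_eq_zero_iff.mp ⟨(fun j => cf j), hcne, hmv⟩
  rw [sDet, dif_pos hlen]
  exact hdet

end PartD

end Symanzik
open Classical

/-- **The Symanzik cycle–tree identity.**  Let `G` be a finite connected graph with
first Betti number `b₁` and `(γ₁,…,γ_{b₁})` an integral basis of the cycle group
`Z₁(G,ℤ) = ker ∂`.  Then each change-of-basis determinant `ε_T = det(𝒵/𝒵_T)` is `±1`
and, in the `b₁`-st exterior power of `C₁(G,ℤ)`,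
`γ₁ ∧ … ∧ γ_{b₁} = Σ_{T spanning tree} ε_T • e_{T^c}`. -/
theorem symanzik_cycle_tree_identity
    {V E : Type*} [Fintype V] [Fintype E] [DecidableEq V] [DecidableEq E]
    [LinearOrder E] (head tail : E → V)
    (hconn : ∀ v w : V, Conn head tail (Finset.univ : Finset E) v w)
    (b₁ : ℕ) (hb₁ : b₁ + Fintype.card V = Fintype.card E + 1)
    (γ : Fin b₁ → (E → ℤ))
    (hγ_indep : LinearIndependent ℤ γ)
    (hγ_span : Submodule.span ℤ (Set.range γ) = LinearMap.ker (bd head tail)) :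
    (∀ T : Finset E, IsSpanningTree head tail T →
        cbDet γ T = 1 ∨ cbDet γ T = -1) ∧
    chainWedge γ =
      ∑ T : Finset E,
        if IsSpanningTree head tail T then cbDet γ T • eWedge (Tᶜ) else 0 := by
  classical
  constructor
  · exact fun T hT => Symanzik.cbDet_unit head tail b₁ hb₁ γ hγ_span T hT
  · rw [Symanzik.wedge_expansion]
    have key : ∀ S : Finset E, Symanzik.sDet γ S • eWedge S
        = if IsSpanningTree head tail (Sᶜ) then Symanzik.sDet γ S • eWedge S else 0 := by
      intro S
      by_cases hst : IsSpanningTree head tail (Sᶜ)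
      · rw [if_pos hst]
      · rw [if_neg hst]
        by_cases hcard : S.card = b₁
        · rw [Symanzik.sDet_eq_zero head tail b₁ hb₁ γ hγ_span S hcard hst, zero_smul]
        · rw [Symanzik.sDet, dif_neg (by rw [Finset.length_sort]; exact hcard), zero_smul]
    calc (∑ S : Finset E, Symanzik.sDet γ S • eWedge S)
        = ∑ S : Finset E,
            (if IsSpanningTree head tail (Sᶜ) then Symanzik.sDet γ S • eWedge S else 0) :=
          Finset.sum_congr rfl (fun S _ => key S)
      _ = ∑ T : Finset E,
            (if IsSpanningTree head tail T then cbDet γ T • eWedge (Tᶜ) else 0) := by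
          refine (Fintype.sum_bijective (fun T : Finset E => Tᶜ)
            (Function.Involutive.bijective (fun s => compl_compl s)) _ _ ?_).symm
          intro T
          simp only [compl_compl, Symanzik.cbDet_eq_sDet]
end

section
/- Let G be a finite connected graph with first Betti number b1. For every spanning tree T of G, the b1-th exterior power of the projection π_{T^c} of C_1(G,ℤ) onto the span of edges not in T, restricted to the top exterior power of the cycle group, satisfies: the sum over all spanning trees T of ⋀^{b1} π_{T^c} equals the identity on ⋀^{b1} Z_1(G,ℤ). -/
/-! Framework: a finite graph is given by a finite vertex type `V`, a finite linearly
ordered type `E` of (positively oriented) edges, and maps `head, tail : E → V`.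
`C_1(G,ℤ)` is modeled as `E → ℤ`. -/

section Graph

variable {V E : Type*} [Fintype V] [Fintype E] [DecidableEq V] [DecidableEq E]
  [LinearOrder E]

/-- The coordinate projection `π_S : C₁(G,ℤ) → C₁(S,ℤ)` killing the edges outside
`S`. -/
def piProj (S : Finset E) (c : E → ℤ) : E → ℤ :=
  fun e => if e ∈ S then c e else 0

end Graph

open Classical

set_option linter.unusedSectionVars false

section Aux

variable {V E : Type*} [Fintype V] [Fintype E] [DecidableEq V] [DecidableEq E]
  [LinearOrder E]

lemma chainWedge_eq_iMulti {n : ℕ} (γ : Fin n → (E → ℤ)) :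
    chainWedge γ = ExteriorAlgebra.ιMulti ℤ n γ := by
  rw [ExteriorAlgebra.ιMulti_apply, chainWedge, List.ofFn_eq_map]

lemma pi_single_inj : Function.Injective (fun e : E => (Pi.single e 1 : E → ℤ)) := by
  intro a b h
  have := congrFun h a
  simp only [Pi.single_apply, if_pos rfl] at this
  by_contra hab
  rw [if_neg (fun h' : a = b => hab h')] at this
  exact one_ne_zero this

lemma iMulti_single_eq_zero {k : ℕ} {f : Fin k → E} (hf : ¬ Function.Injective f) :
    ExteriorAlgebra.ιMulti ℤ k (fun i => (Pi.single (f i) 1 : E → ℤ)) = 0 :=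
  AlternatingMap.map_eq_zero_of_not_injective _ _
    (fun h => hf (fun a b hab => h (show (Pi.single (f a) 1 : E → ℤ) = Pi.single (f b) 1 by rw [hab])))

lemma iMulti_expand {k : ℕ} (w : Fin k → (E → ℤ)) :
    ExteriorAlgebra.ιMulti ℤ k w =
      ∑ f : Fin k → E, (∏ i, w i (f i)) •
        ExteriorAlgebra.ιMulti ℤ k (fun i => (Pi.single (f i) 1 : E → ℤ)) := by
  have h1 : w = fun i => ∑ e : E, w i e • (Pi.single e 1 : E → ℤ) := by
    funext i e'
    simp [Pi.single_apply, mul_ite]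
  conv_lhs => rw [h1]
  rw [show (ExteriorAlgebra.ιMulti ℤ k (M := E → ℤ)) (fun i => ∑ e : E, w i e • (Pi.single e 1 : E → ℤ))
      = (ExteriorAlgebra.ιMulti ℤ k (M := E → ℤ)).toMultilinearMap
        (fun i => ∑ e : E, w i e • (Pi.single e 1 : E → ℤ)) from rfl]
  rw [MultilinearMap.map_sum]
  refine Finset.sum_congr rfl fun f _ => ?_
  exact (ExteriorAlgebra.ιMulti ℤ k (M := E → ℤ)).toMultilinearMap.map_smul_univ
    (fun i => w i (f i)) (fun i => (Pi.single (f i) 1 : E → ℤ))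


lemma sum_proj_eq {k : ℕ} (γ : Fin k → (E → ℤ)) :
    (∑ S : Finset E, if S.card = k then
        ExteriorAlgebra.ιMulti ℤ k (fun i => piProj S (γ i)) else 0)
      = ExteriorAlgebra.ιMulti ℤ k γ := by
  classical
  have key : ∀ S : Finset E,
      (if S.card = k then ExteriorAlgebra.ιMulti ℤ k (fun i => piProj S (γ i)) else 0)
      = ∑ f : Fin k → E, (if S.card = k ∧ ∀ i, f i ∈ S then
          (∏ i, γ i (f i)) • ExteriorAlgebra.ιMulti ℤ k
            (fun i => (Pi.single (f i) 1 : E → ℤ)) else 0) := by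
    intro S
    by_cases hS : S.card = k
    · simp only [hS, if_true, true_and]
      rw [iMulti_expand]
      refine Finset.sum_congr rfl fun f _ => ?_
      by_cases hf : ∀ i, f i ∈ S
      · rw [if_pos hf]
        congr 1
        refine Finset.prod_congr rfl fun i _ => ?_
        simp [piProj, hf i]
      · rw [if_neg hf]
        push_neg at hf
        obtain ⟨i, hi⟩ := hf
        rw [Finset.prod_eq_zero (Finset.mem_univ i) (by simp [piProj, hi]), zero_smul]
    · simp [hS]
  rw [Finset.sum_congr rfl fun S _ => key S, Finset.sum_comm, iMulti_expand]
  refine Finset.sum_congr rfl fun f _ => ?_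
  by_cases hf : Function.Injective f
  · have hcard : (Finset.univ.image f).card = k := by
      rw [Finset.card_image_of_injective _ hf, Finset.card_univ, Fintype.card_fin]
    have himg : ∀ S : Finset E, (S.card = k ∧ ∀ i, f i ∈ S) ↔ S = Finset.univ.image f := by
      intro S
      constructor
      · rintro ⟨h1, h2⟩
        have hsub : Finset.univ.image f ⊆ S := by
          intro x hx
          obtain ⟨i, _, rfl⟩ := Finset.mem_image.mp hx
          exact h2 i
        exact (Finset.eq_of_subset_of_card_le hsub (by rw [h1, hcard])).symm
      · rintro rfl
        exact ⟨hcard, fun i => Finset.mem_image_of_mem f (Finset.mem_univ i)⟩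
    calc (∑ S : Finset E, if S.card = k ∧ ∀ i, f i ∈ S then
            (∏ i, γ i (f i)) • ExteriorAlgebra.ιMulti ℤ k
              (fun i => (Pi.single (f i) 1 : E → ℤ)) else 0)
        = ∑ S : Finset E, if S = Finset.univ.image f then
            (∏ i, γ i (f i)) • ExteriorAlgebra.ιMulti ℤ k
              (fun i => (Pi.single (f i) 1 : E → ℤ)) else 0 := by
          exact Finset.sum_congr rfl fun S _ => if_congr (himg S) rfl rfl
      _ = _ := by rw [Finset.sum_ite_eq' Finset.univ (Finset.univ.image f)]; simp
  · rw [iMulti_single_eq_zero hf, smul_zero]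
    exact Finset.sum_eq_zero fun S _ => ite_self 0


lemma iMulti_proj_eq_det {k : ℕ} (γ : Fin k → (E → ℤ)) (S : Finset E) (hS : S.card = k) :
    ExteriorAlgebra.ιMulti ℤ k (fun i => piProj S (γ i)) =
      (Matrix.of fun i j => γ j ((S.orderIsoOfFin hS i : E))).det •
        ExteriorAlgebra.ιMulti ℤ k
          (fun i => (Pi.single ((S.orderIsoOfFin hS i : E)) 1 : E → ℤ)) := by
  classical
  set s : Fin k → E := fun i => ((S.orderIsoOfFin hS i : E)) with hs
  have hsinj : Function.Injective s := fun a b hab => by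
    have := (S.orderIsoOfFin hS).injective (Subtype.ext hab)
    exact this
  have hstep : ∀ i, piProj S (γ i) = ∑ j : Fin k, γ i (s j) • (Pi.single (s j) 1 : E → ℤ) := by
    intro i
    funext e
    by_cases he : e ∈ S
    · set j₀ := (S.orderIsoOfFin hS).symm ⟨e, he⟩ with hj₀
      have hsj₀ : s j₀ = e := by
        show ((S.orderIsoOfFin hS) j₀ : E) = e
        rw [hj₀]
        exact congrArg Subtype.val ((S.orderIsoOfFin hS).apply_symm_apply ⟨e, he⟩)
      rw [Finset.sum_apply]
      rw [Finset.sum_eq_single j₀]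
      · simp [piProj, he, hsj₀]
      · intro j _ hj
        have : e ≠ s j := by
          intro h
          have h2 : (⟨e, he⟩ : ↥S) = (S.orderIsoOfFin hS) j := Subtype.ext h
          have hjj : j₀ = j := by rw [hj₀, h2, OrderIso.symm_apply_apply]
          exact hj hjj.symm
        simp [Pi.single_apply, this]
      · intro h
        exact absurd (Finset.mem_univ j₀) h
    · rw [Finset.sum_apply]
      have : ∀ j : Fin k, (γ i (s j) • (Pi.single (s j) 1 : E → ℤ)) e = 0 := by
        intro j
        have : e ≠ s j := fun h => he (h ▸ (S.orderIsoOfFin hS j).2)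
        simp [Pi.single_apply, this]
      rw [Finset.sum_eq_zero fun j _ => this j]
      simp [piProj, he]
  conv_lhs => rw [show (fun i => piProj S (γ i)) = fun i => ∑ j : Fin k, γ i (s j) • (Pi.single (s j) 1 : E → ℤ) from funext hstep]
  rw [show (ExteriorAlgebra.ιMulti ℤ k (M := E → ℤ))
        (fun i => ∑ j : Fin k, γ i (s j) • (Pi.single (s j) 1 : E → ℤ))
      = (ExteriorAlgebra.ιMulti ℤ k (M := E → ℤ)).toMultilinearMap
        (fun i => ∑ j : Fin k, γ i (s j) • (Pi.single (s j) 1 : E → ℤ)) from rfl]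
  rw [MultilinearMap.map_sum]
  have hterm : ∀ f : Fin k → Fin k,
      (ExteriorAlgebra.ιMulti ℤ k (M := E → ℤ)).toMultilinearMap
        (fun i => γ i (s (f i)) • (Pi.single (s (f i)) 1 : E → ℤ))
      = (∏ i, γ i (s (f i))) • ExteriorAlgebra.ιMulti ℤ k
          (fun i => (Pi.single (s (f i)) 1 : E → ℤ)) := fun f =>
    (ExteriorAlgebra.ιMulti ℤ k (M := E → ℤ)).toMultilinearMap.map_smul_univ
      (fun i => γ i (s (f i))) (fun i => (Pi.single (s (f i)) 1 : E → ℤ))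
  rw [Finset.sum_congr rfl fun f _ => hterm f]
  rw [← Finset.sum_filter_of_ne (p := fun f : Fin k → Fin k => Function.Bijective f)
    (fun f _ hne => by
      by_contra hnb
      have hni : ¬ Function.Injective f := fun hi => hnb (Finite.injective_iff_bijective.mp hi)
      have : ¬ Function.Injective (fun i => s (f i)) := fun hi =>
        hni (fun a b hab => hi (congrArg s hab))
      rw [iMulti_single_eq_zero this, smul_zero] at hne
      exact hne rfl)]
  rw [Matrix.det_apply]
  rw [Finset.sum_smul]
  refine (Finset.sum_bij (fun (σ : Equiv.Perm (Fin k)) _ => (σ : Fin k → Fin k))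
    (fun σ _ => Finset.mem_filter.mpr ⟨Finset.mem_univ _, σ.bijective⟩)
    (fun σ₁ _ σ₂ _ h => Equiv.coe_fn_injective h)
    (fun f hf => ⟨Equiv.ofBijective f (Finset.mem_filter.mp hf).2, Finset.mem_univ _, rfl⟩)
    fun σ _ => ?_).symm
  have hperm : ExteriorAlgebra.ιMulti ℤ k (fun i => (Pi.single (s (σ i)) 1 : E → ℤ))
      = Equiv.Perm.sign σ • ExteriorAlgebra.ιMulti ℤ k
          (fun i => (Pi.single (s i) 1 : E → ℤ)) := by
    have := (ExteriorAlgebra.ιMulti ℤ k (M := E → ℤ)).map_perm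
      (fun i => (Pi.single (s i) 1 : E → ℤ)) σ
    exact this
  rw [hperm, Units.smul_def, Units.smul_def, smul_smul]
  congr 1
  show (Equiv.Perm.sign σ : ℤ) * ∏ i, γ i (s (σ i)) = (∏ i, γ i (s (σ i))) * (Equiv.Perm.sign σ : ℤ)
  ring


/-- boundary over ℚ -/
def bdQ (head tail : E → V) : (E → ℚ) →ₗ[ℚ] (V → ℚ) where
  toFun c := fun v => ∑ e, c e *
    ((if head e = v then 1 else 0) - (if tail e = v then 1 else 0))
  map_add' c d := by
    funext v
    simp [add_mul, Finset.sum_add_distrib]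
  map_smul' r c := by
    funext v
    simp [Finset.mul_sum, mul_assoc]

lemma bdQ_cast (head tail : E → V) (c : E → ℤ) (h : bd head tail c = 0) :
    bdQ head tail (fun e => (c e : ℚ)) = 0 := by
  funext v
  have hv : (∑ e, c e * ((if head e = v then 1 else 0) - (if tail e = v then 1 else 0))) = 0 := by
    simpa [bd] using congrFun h v
  simp only [bdQ, LinearMap.coe_mk, AddHom.coe_mk, Pi.zero_apply]
  calc (∑ e, (c e : ℚ) * ((if head e = v then 1 else 0) - (if tail e = v then 1 else 0)))
      = ((∑ e, c e * ((if head e = v then 1 else 0) - (if tail e = v then 1 else 0)) : ℤ) : ℚ) := by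
        push_cast [apply_ite (fun z : ℤ => (z : ℚ))]
        rfl
    _ = 0 := by rw [hv]; norm_num

lemma bdQ_single (head tail : E → V) (e : E) :
    bdQ head tail (Pi.single e 1) =
      (Pi.single (head e) 1 : V → ℚ) - Pi.single (tail e) 1 := by
  funext v
  simp only [bdQ, LinearMap.coe_mk, AddHom.coe_mk, Pi.sub_apply]
  rw [Finset.sum_eq_single e]
  · simp [Pi.single_apply, eq_comm]
  · intro e' _ hne
    simp [Pi.single_apply, hne]
  · intro h
    exact absurd (Finset.mem_univ e) h

/-- extension by zero -/
def extL (S : Finset E) : ((↥S) → ℚ) →ₗ[ℚ] (E → ℚ) where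
  toFun c := fun e => if h : e ∈ S then c ⟨e, h⟩ else 0
  map_add' c d := by
    funext e
    by_cases h : e ∈ S <;> simp [h]
  map_smul' r c := by
    funext e
    by_cases h : e ∈ S <;> simp [h]

/-- projection as a ℚ-linear map -/
def projQL (S : Finset E) : (E → ℚ) →ₗ[ℚ] (E → ℚ) where
  toFun c := fun e => if e ∈ S then c e else 0
  map_add' c d := by
    funext e
    by_cases h : e ∈ S <;> simp [h]
  map_smul' r c := by
    funext e
    by_cases h : e ∈ S <;> simp [h]

lemma finrank_ker_bdQ_le (head tail : E → V)
    (hconn : ∀ v w : V, Conn head tail (Finset.univ : Finset E) v w)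
    (b₁ : ℕ) (hb₁ : b₁ + Fintype.card V = Fintype.card E + 1) :
    Module.finrank ℚ (LinearMap.ker (bdQ head tail)) ≤ b₁ := by
  classical
  have hrn := LinearMap.finrank_range_add_finrank_ker (bdQ head tail)
  rw [Module.finrank_fintype_fun_eq_card] at hrn
  suffices h : Fintype.card V ≤ Module.finrank ℚ (LinearMap.range (bdQ head tail)) + 1 by omega
  by_cases hV : IsEmpty V
  · simp [Fintype.card_eq_zero]
  rw [not_isEmpty_iff] at hV
  obtain ⟨v₀⟩ := hV
  have hmem : ∀ v : V, (Pi.single v 1 - Pi.single v₀ 1 : V → ℚ) ∈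
      LinearMap.range (bdQ head tail) := by
    intro v
    have h := hconn v₀ v
    induction h with
    | refl => simp
    | @tail b c hab hbc ih =>
      obtain ⟨e, -, hor⟩ := hbc
      have hsingle := bdQ_single head tail e
      have hstep : (Pi.single c 1 - Pi.single b 1 : V → ℚ) ∈
          LinearMap.range (bdQ head tail) := by
        rcases hor with ⟨h1, h2⟩ | ⟨h1, h2⟩
        · refine ⟨-(Pi.single e 1), ?_⟩
          rw [map_neg, hsingle, h1, h2]
          abel
        · refine ⟨Pi.single e 1, ?_⟩
          rw [hsingle, h1, h2]
      have := Submodule.add_mem _ ih hstep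
      simpa using this
  have hxrep : ∀ x : V → ℚ, (∑ v, x v • (Pi.single v 1 : V → ℚ)) = x := by
    intro x
    have : ∀ v : V, x v • (Pi.single v 1 : V → ℚ) = Pi.single v (x v) := by
      intro v
      rw [← Pi.single_smul, smul_eq_mul, mul_one]
    rw [Finset.sum_congr rfl fun v _ => this v]
    exact Finset.univ_sum_single x
  have htop : (⊤ : Submodule ℚ (V → ℚ)) ≤
      LinearMap.range (bdQ head tail) ⊔ (ℚ ∙ (Pi.single v₀ 1 : V → ℚ)) := by
    intro x _
    have hx : x = (∑ v, x v • ((Pi.single v 1 : V → ℚ) - Pi.single v₀ 1))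
        + (∑ v, x v) • (Pi.single v₀ 1 : V → ℚ) := by
      simp only [smul_sub, Finset.sum_sub_distrib, hxrep x, ← Finset.sum_smul]
      abel
    rw [hx]
    refine Submodule.add_mem _
      (Submodule.mem_sup_left (Submodule.sum_mem _ fun v _ =>
        Submodule.smul_mem _ _ (hmem v)))
      (Submodule.mem_sup_right (Submodule.smul_mem _ _
        (Submodule.mem_span_singleton_self _)))
  have hsup : LinearMap.range (bdQ head tail) ⊔ (ℚ ∙ (Pi.single v₀ 1 : V → ℚ)) = ⊤ :=
    top_le_iff.mp htop
  have h2 : Module.finrank ℚ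
      ((LinearMap.range (bdQ head tail) ⊔ (ℚ ∙ (Pi.single v₀ 1 : V → ℚ)) : Submodule ℚ (V → ℚ)))
      = Fintype.card V := by
    rw [hsup, finrank_top, Module.finrank_fintype_fun_eq_card]
  have h3 := Submodule.finrank_sup_add_finrank_inf_eq
    (LinearMap.range (bdQ head tail)) (ℚ ∙ (Pi.single v₀ 1 : V → ℚ))
  have h4 : Module.finrank ℚ (ℚ ∙ (Pi.single v₀ 1 : V → ℚ)) ≤ 1 := by
    rw [finrank_span_singleton (by
      intro hz
      have := congrFun hz v₀
      simp at this)]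
  omega


lemma exists_cycle_support (head tail : E → V) (S : Finset E)
    (hcard : Sᶜ.card + 1 = Fintype.card V)
    (hnc : ¬ ∀ v w : V, Conn head tail Sᶜ v w) :
    ∃ z : E → ℚ, z ≠ 0 ∧ bdQ head tail z = 0 ∧ ∀ e ∈ S, z e = 0 := by
  classical
  push_neg at hnc
  obtain ⟨v₀, w₀, hvw⟩ := hnc
  set A : Finset V := Finset.univ.filter (fun v => Conn head tail Sᶜ v₀ v) with hA
  have hv₀A : v₀ ∈ A := by
    simp only [hA, Finset.mem_filter, Finset.mem_univ, true_and]
    exact Relation.ReflTransGen.refl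
  have hw₀A : w₀ ∉ A := by
    simp only [hA, Finset.mem_filter, Finset.mem_univ, true_and]
    exact hvw
  have hclos : ∀ e ∈ Sᶜ, (head e ∈ A ↔ tail e ∈ A) := by
    intro e he
    simp only [hA, Finset.mem_filter, Finset.mem_univ, true_and]
    constructor
    · intro h
      exact h.tail ⟨e, he, Or.inl ⟨rfl, rfl⟩⟩
    · intro h
      exact h.tail ⟨e, he, Or.inr ⟨rfl, rfl⟩⟩
  set ψ₁ : (V → ℚ) →ₗ[ℚ] ℚ := ∑ v ∈ A, LinearMap.proj v with hψ₁
  set ψ₂ : (V → ℚ) →ₗ[ℚ] ℚ := ∑ v : V, LinearMap.proj v with hψ₂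
  set ψ : (V → ℚ) →ₗ[ℚ] (ℚ × ℚ) := ψ₁.prod ψ₂ with hψ
  set φ : ((↥(Sᶜ)) → ℚ) →ₗ[ℚ] (V → ℚ) := (bdQ head tail).comp (extL Sᶜ) with hφ
  have hψ₁app : ∀ x : V → ℚ, ψ₁ x = ∑ v ∈ A, x v := by
    intro x
    simp [hψ₁, LinearMap.sum_apply]
  have hψ₂app : ∀ x : V → ℚ, ψ₂ x = ∑ v, x v := by
    intro x
    simp [hψ₂, LinearMap.sum_apply]
  have hbdsum : ∀ (c : E → ℚ) (B : Finset V),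
      (∑ v ∈ B, bdQ head tail c v) =
        ∑ e, c e * ((if head e ∈ B then 1 else 0) - (if tail e ∈ B then 1 else 0)) := by
    intro c B
    simp only [bdQ, LinearMap.coe_mk, AddHom.coe_mk]
    rw [Finset.sum_comm]
    refine Finset.sum_congr rfl fun e _ => ?_
    rw [← Finset.mul_sum, Finset.sum_sub_distrib, Finset.sum_ite_eq, Finset.sum_ite_eq]
  have hrange : LinearMap.range φ ≤ LinearMap.ker ψ := by
    rintro x ⟨c, rfl⟩
    have hφc : ∀ B : Finset V, (∀ e ∈ Sᶜ, ((head e ∈ B) ↔ (tail e ∈ B))) →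
        (∑ v ∈ B, (φ c) v) = 0 := by
      intro B hB
      show (∑ v ∈ B, bdQ head tail (extL Sᶜ c) v) = 0
      rw [hbdsum]
      refine Finset.sum_eq_zero fun e _ => ?_
      by_cases he : e ∈ Sᶜ
      · rw [show (if head e ∈ B then (1:ℚ) else 0) = (if tail e ∈ B then 1 else 0) by
          simp [hB e he]]
        ring
      · have : extL Sᶜ c e = 0 := dif_neg he
        rw [this, zero_mul]
    rw [LinearMap.mem_ker]
    have c1 : ψ₁ (φ c) = 0 := by rw [hψ₁app]; exact hφc A hclos
    have c2 : ψ₂ (φ c) = 0 := by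
      rw [hψ₂app]
      exact hφc Finset.univ (fun e _ => by simp)
    show (ψ₁ (φ c), ψ₂ (φ c)) = 0
    rw [c1, c2]
    rfl
  have hψ₁single : ∀ v : V, ψ₁ (Pi.single v 1) = if v ∈ A then 1 else 0 := by
    intro v
    rw [hψ₁app]
    simp [Pi.single_apply]
  have hψ₂single : ∀ v : V, ψ₂ (Pi.single v 1) = 1 := by
    intro v
    rw [hψ₂app]
    simp [Pi.single_apply]
  have hsurj : Function.Surjective ψ := by
    rintro ⟨a, b⟩
    refine ⟨a • (Pi.single v₀ (1:ℚ) : V → ℚ) + (b - a) • (Pi.single w₀ (1:ℚ) : V → ℚ), ?_⟩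
    have e1 : ψ₁ (a • (Pi.single v₀ (1:ℚ) : V → ℚ) + (b - a) • (Pi.single w₀ (1:ℚ) : V → ℚ)) = a := by
      rw [map_add, map_smul, map_smul, hψ₁single, hψ₁single, if_pos hv₀A, if_neg hw₀A]
      simp
    have e2 : ψ₂ (a • (Pi.single v₀ (1:ℚ) : V → ℚ) + (b - a) • (Pi.single w₀ (1:ℚ) : V → ℚ)) = b := by
      rw [map_add, map_smul, map_smul, hψ₂single, hψ₂single]
      simp
    show (ψ₁ _, ψ₂ _) = (a, b)
    rw [e1, e2]
  have d1 := LinearMap.finrank_range_add_finrank_ker ψ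
  have d2 := LinearMap.finrank_range_add_finrank_ker φ
  rw [Module.finrank_fintype_fun_eq_card] at d1 d2
  have d3 : Module.finrank ℚ (LinearMap.range ψ) = 2 := by
    rw [LinearMap.range_eq_top.mpr hsurj, finrank_top, Module.finrank_prod,
      Module.finrank_self]
  have d4 : Module.finrank ℚ (LinearMap.range φ) ≤ Module.finrank ℚ (LinearMap.ker ψ) :=
    Submodule.finrank_mono hrange
  have d5 : Fintype.card ↥(Sᶜ) = Sᶜ.card := Fintype.card_coe _
  have hpos : 0 < Module.finrank ℚ (LinearMap.ker φ) := by omega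
  obtain ⟨x, hx0⟩ := Module.finrank_pos_iff_exists_ne_zero.mp hpos
  refine ⟨extL Sᶜ (x : (↥(Sᶜ) → ℚ)), ?_, ?_, ?_⟩
  · intro h
    apply hx0
    apply Subtype.ext
    funext ep
    have := congrFun h (ep : E)
    rw [show extL Sᶜ (x : (↥(Sᶜ) → ℚ)) (ep : E) = (x : (↥(Sᶜ) → ℚ)) ep by
      show dite _ _ _ = _
      rw [dif_pos ep.2]] at this
    exact this
  · exact LinearMap.mem_ker.mp x.2
  · intro e he
    show dite _ _ _ = 0
    rw [dif_neg (by simp [Finset.mem_compl, he])]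


lemma exists_dependence (head tail : E → V)
    (hconn : ∀ v w : V, Conn head tail (Finset.univ : Finset E) v w)
    (b₁ : ℕ) (hb₁ : b₁ + Fintype.card V = Fintype.card E + 1)
    (γ : Fin b₁ → (E → ℤ)) (hγ : ∀ i, bd head tail (γ i) = 0)
    (S : Finset E) (hScard : S.card = b₁)
    (hnc : ¬ ∀ v w : V, Conn head tail Sᶜ v w) :
    ∃ c : Fin b₁ → ℚ, (∃ i, c i ≠ 0) ∧ ∀ e ∈ S, (∑ i, c i * (γ i e : ℚ)) = 0 := by
  classical
  have hcard : Sᶜ.card + 1 = Fintype.card V := by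
    have := Finset.card_add_card_compl S
    omega
  obtain ⟨z, hz0, hzcyc, hzS⟩ := exists_cycle_support head tail S hcard hnc
  set Zq := LinearMap.ker (bdQ head tail) with hZq
  set f : Zq →ₗ[ℚ] (E → ℚ) := (projQL S).comp Zq.subtype with hf
  have hzmem : z ∈ Zq := LinearMap.mem_ker.mpr hzcyc
  have hzker : (⟨z, hzmem⟩ : Zq) ∈ LinearMap.ker f := by
    rw [LinearMap.mem_ker]
    funext e
    show (if e ∈ S then z e else 0) = 0
    by_cases he : e ∈ S
    · rw [if_pos he]; exact hzS e he
    · rw [if_neg he]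
  have h5 := LinearMap.finrank_range_add_finrank_ker f
  have h6 : 0 < Module.finrank ℚ (LinearMap.ker f) := by
    refine (Module.finrank_pos_iff_exists_ne_zero (R := ℚ) (M := LinearMap.ker f)).mpr ?_
    refine ⟨⟨⟨z, hzmem⟩, hzker⟩, ?_⟩
    intro h
    exact hz0 (congrArg Subtype.val (congrArg Subtype.val h))
  have h7 : Module.finrank ℚ Zq ≤ b₁ := finrank_ker_bdQ_le head tail hconn b₁ hb₁
  have h8 : Module.finrank ℚ (LinearMap.range f) < b₁ := by omega
  have hmemr : ∀ i : Fin b₁, (fun e => if e ∈ S then (γ i e : ℚ) else 0) ∈ LinearMap.range f := by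
    intro i
    refine ⟨⟨fun e => (γ i e : ℚ), LinearMap.mem_ker.mpr (bdQ_cast head tail (γ i) (hγ i))⟩, rfl⟩
  set g : Fin b₁ → ↥(LinearMap.range f) :=
    fun i => ⟨fun e => if e ∈ S then (γ i e : ℚ) else 0, hmemr i⟩ with hg
  have hnl : ¬ LinearIndependent ℚ g := by
    intro h
    have := h.fintype_card_le_finrank
    rw [Fintype.card_fin] at this
    omega
  obtain ⟨c, hsum, i, hci⟩ := Fintype.not_linearIndependent_iff.mp hnl
  refine ⟨c, ⟨i, hci⟩, ?_⟩
  intro e he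
  have h9 : (∑ j, c j • (fun e => if e ∈ S then (γ j e : ℚ) else 0)) = (0 : E → ℚ) := by
    have := congrArg (fun y => ((y : ↥(LinearMap.range f)) : E → ℚ)) hsum
    simpa [hg] using this
  have h10 := congrFun h9 e
  simp only [Finset.sum_apply, Pi.smul_apply, smul_eq_mul, if_pos he, Pi.zero_apply] at h10
  exact h10

lemma iMulti_proj_eq_zero (head tail : E → V)
    (hconn : ∀ v w : V, Conn head tail (Finset.univ : Finset E) v w)
    (b₁ : ℕ) (hb₁ : b₁ + Fintype.card V = Fintype.card E + 1)
    (γ : Fin b₁ → (E → ℤ)) (hγ : ∀ i, bd head tail (γ i) = 0)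
    (S : Finset E) (hScard : S.card = b₁)
    (hnc : ¬ ∀ v w : V, Conn head tail Sᶜ v w) :
    ExteriorAlgebra.ιMulti ℤ b₁ (fun i => piProj S (γ i)) = 0 := by
  classical
  rw [iMulti_proj_eq_det γ S hScard]
  obtain ⟨c, ⟨i₀, hi₀⟩, hrel⟩ := exists_dependence head tail hconn b₁ hb₁ γ hγ S hScard hnc
  have hdet : (Matrix.of fun i j => γ j ((S.orderIsoOfFin hScard i : E))).det = 0 := by
    have hq : (((Matrix.of fun i j => γ j ((S.orderIsoOfFin hScard i : E))).det : ℤ) : ℚ) = 0 := by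
      show (Int.castRingHom ℚ) (Matrix.of fun i j => γ j ((S.orderIsoOfFin hScard i : E))).det = 0
      rw [RingHom.map_det]
      rw [← Matrix.exists_mulVec_eq_zero_iff]
      refine ⟨c, ?_, ?_⟩
      · intro h
        exact hi₀ (congrFun h i₀)
      · funext i
        show (∑ j, ((Matrix.of fun i j => γ j ((S.orderIsoOfFin hScard i : E))).map
          (Int.castRingHom ℚ)) i j * c j) = 0
        have := hrel ((S.orderIsoOfFin hScard i : E)) ((S.orderIsoOfFin hScard i).2)
        rw [← this]
        refine Finset.sum_congr rfl fun j _ => ?_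
        simp [Matrix.map_apply, mul_comm]
    exact_mod_cast hq
  rw [hdet, zero_smul]

end Aux

/-- **The sum over spanning trees of the top exterior powers of the projections
`π_{T^c}` is the identity on `⋀^{b₁} Z₁(G,ℤ)`.**  Equivalently (on the generating
wedges of cycles): for every family `γ₁,…,γ_{b₁}` of cycles,
`Σ_{T spanning tree} π_{T^c}(γ₁) ∧ … ∧ π_{T^c}(γ_{b₁}) = γ₁ ∧ … ∧ γ_{b₁}`. -/
theorem sum_exterior_projections_eq_id
    {V E : Type*} [Fintype V] [Fintype E] [DecidableEq V] [DecidableEq E]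
    [LinearOrder E] (head tail : E → V)
    (hconn : ∀ v w : V, Conn head tail (Finset.univ : Finset E) v w)
    (b₁ : ℕ) (hb₁ : b₁ + Fintype.card V = Fintype.card E + 1)
    (γ : Fin b₁ → (E → ℤ)) (hγ : ∀ i, bd head tail (γ i) = 0) :
    (∑ T : Finset E,
        if IsSpanningTree head tail T then
          chainWedge (fun i => piProj (Tᶜ) (γ i)) else 0) =
      chainWedge γ := by
  classical
  have hinv : Function.Involutive (fun T : Finset E => Tᶜ) := fun T => compl_compl T
  have hre : (∑ T : Finset E, if IsSpanningTree head tail T then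
        chainWedge (fun i => piProj (Tᶜ) (γ i)) else 0)
      = ∑ S : Finset E, (if IsSpanningTree head tail (Sᶜ) then
          chainWedge (fun i => piProj S (γ i)) else 0) := by
    refine Fintype.sum_equiv hinv.toPerm _ _ (fun T => ?_)
    simp only [Function.Involutive.coe_toPerm]
    simp only [compl_compl]
  rw [hre, chainWedge_eq_iMulti, ← sum_proj_eq γ]
  refine Finset.sum_congr rfl fun S _ => ?_
  by_cases hst : IsSpanningTree head tail Sᶜ
  · have h2 := Finset.card_add_card_compl S
    have hcS : S.card = b₁ := by
      have h1 := hst.1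
      omega
    rw [if_pos hst, if_pos hcS, chainWedge_eq_iMulti]
  · rw [if_neg hst]
    by_cases hcS : S.card = b₁
    · rw [if_pos hcS]
      have hnc : ¬ ∀ v w : V, Conn head tail Sᶜ v w := by
        intro hcw
        refine hst ⟨?_, hcw⟩
        have h2 := Finset.card_add_card_compl S
        omega
      exact (iMulti_proj_eq_zero head tail hconn b₁ hb₁ γ hγ S hcS hnc).symm
    · rw [if_neg hcS]
end
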